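/- Let S = [[s₁, −s₂*],[s₂, s₁*]] ∈ Σ. Then the similarity orbit Sim(S) = {X⁻¹SX : X ∈ Σ, X ≠ 0} (every nonzero X ∈ Σ being invertible) equals the set of all matrices T = [[t₁, −t₂*],[t₂, t₁*]] ∈ Σ such that Re(s₁) = Re(t₁) and (Im s₁)² + |s₂|² = (Im t₁)² + |t₂|². -/

import Mathlib

open Matrix Complex

noncomputable def sigma2 : Matrix (Fin 2) (Fin 2) ℂ := !![0, -Complex.I; Complex.I, 0]

/-- Membership in Σ: S* = σ₂ S σ₂ entrywise-conjugate symmetry. -/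
def memSigma (S : Matrix (Fin 2) (Fin 2) ℂ) : Prop :=
  S.map (starRingEnd ℂ) = sigma2 * S * sigma2

lemma memSigma_form (x₁ x₂ : ℂ) :
    memSigma !![x₁, -(starRingEnd ℂ) x₂; x₂, (starRingEnd ℂ) x₁] := by
  unfold memSigma sigma2
  ext i j
  fin_cases i <;> fin_cases j <;>
    simp [Matrix.mul_apply, Fin.sum_univ_two, Matrix.map_apply] <;> ring_nf <;> simp [Complex.I_sq]

lemma memSigma_iff (X : Matrix (Fin 2) (Fin 2) ℂ) :
    memSigma X ↔ ∃ x₁ x₂ : ℂ, X = !![x₁, -(starRingEnd ℂ) x₂; x₂, (starRingEnd ℂ) x₁] := by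
  constructor
  · intro h
    refine ⟨X 0 0, X 1 0, ?_⟩
    have h01 := congrFun (congrFun h 0) 1
    have h11 := congrFun (congrFun h 1) 1
    simp [memSigma, sigma2, Matrix.mul_apply, Matrix.vecMul, dotProduct, Fin.sum_univ_two, Matrix.map_apply] at h01 h11
    ext i j
    fin_cases i <;> fin_cases j
    · rfl
    · show X 0 1 = -(starRingEnd ℂ) (X 1 0)
      have h := congrArg (starRingEnd ℂ) h01
      simp at h
      linear_combination h + (starRingEnd ℂ) (X 1 0) * Complex.I_mul_I
    · rfl
    · show X 1 1 = (starRingEnd ℂ) (X 0 0)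
      have h := congrArg (starRingEnd ℂ) h11
      simp at h
      linear_combination h - (starRingEnd ℂ) (X 0 0) * Complex.I_mul_I
  · rintro ⟨x₁, x₂, rfl⟩
    exact memSigma_form x₁ x₂

lemma sigma_det (x₁ x₂ : ℂ) :
    (!![x₁, -(starRingEnd ℂ) x₂; x₂, (starRingEnd ℂ) x₁]).det
      = ((Complex.normSq x₁ + Complex.normSq x₂ : ℝ) : ℂ) := by
  rw [Matrix.det_fin_two_of]
  push_cast [← Complex.mul_conj]
  ring

lemma sigma_det_isUnit (x₁ x₂ : ℂ) (h : ¬(x₁ = 0 ∧ x₂ = 0)) :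
    IsUnit (!![x₁, -(starRingEnd ℂ) x₂; x₂, (starRingEnd ℂ) x₁]).det := by
  rw [sigma_det, isUnit_iff_ne_zero]
  intro hc
  rw [Complex.ofReal_eq_zero] at hc
  have h1 := Complex.normSq_nonneg x₁
  have h2 := Complex.normSq_nonneg x₂
  exact h ⟨Complex.normSq_eq_zero.mp (by linarith),
    Complex.normSq_eq_zero.mp (by linarith)⟩

lemma conj_of_eq (X S T : Matrix (Fin 2) (Fin 2) ℂ) (hu : IsUnit X.det)
    (h : S * X = X * T) : T = X⁻¹ * S * X := by
  rw [mul_assoc, h, ← mul_assoc, Matrix.nonsing_inv_mul X hu, one_mul]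

/-- the similarity orbit of S = [[s₁, −s₂*],[s₂, s₁*]] ∈ Σ under
conjugation by nonzero elements of Σ equals the set of T = [[t₁, −t₂*],[t₂, t₁*]]
with Re s₁ = Re t₁ and (Im s₁)² + |s₂|² = (Im t₁)² + |t₂|². -/
theorem similarity_orbit_in_Sigma (s₁ s₂ : ℂ)
    (S : Matrix (Fin 2) (Fin 2) ℂ)
    (hS : S = !![s₁, -(starRingEnd ℂ) s₂; s₂, (starRingEnd ℂ) s₁]) :
    {T : Matrix (Fin 2) (Fin 2) ℂ |
        ∃ X : Matrix (Fin 2) (Fin 2) ℂ, memSigma X ∧ X ≠ 0 ∧ T = X⁻¹ * S * X} =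
    {T : Matrix (Fin 2) (Fin 2) ℂ |
        ∃ t₁ t₂ : ℂ, T = !![t₁, -(starRingEnd ℂ) t₂; t₂, (starRingEnd ℂ) t₁] ∧
          s₁.re = t₁.re ∧
          s₁.im ^ 2 + ‖s₂‖ ^ 2 = t₁.im ^ 2 + ‖t₂‖ ^ 2} := by
  subst hS
  ext T
  simp only [Set.mem_setOf_eq]
  constructor
  · rintro ⟨X, hX, hX0, rfl⟩
    obtain ⟨x₁, x₂, rfl⟩ := (memSigma_iff X).mp hX
    have hx : ¬(x₁ = 0 ∧ x₂ = 0) := by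
      rintro ⟨rfl, rfl⟩
      exact hX0 (by ext i j; fin_cases i <;> fin_cases j <;> simp)
    have hu := sigma_det_isUnit x₁ x₂ hx
    set D : ℂ := x₁ * (starRingEnd ℂ) x₁ + x₂ * (starRingEnd ℂ) x₂ with hDdef
    have hDne : D ≠ 0 := by
      intro hc
      apply hx
      have h' : ((Complex.normSq x₁ + Complex.normSq x₂ : ℝ) : ℂ) = 0 := by
        rw [← hc, hDdef]; push_cast [← Complex.mul_conj]; ring
      rw [Complex.ofReal_eq_zero] at h'
      have h1 := Complex.normSq_nonneg x₁
      have h2 := Complex.normSq_nonneg x₂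
      exact ⟨Complex.normSq_eq_zero.mp (by linarith),
        Complex.normSq_eq_zero.mp (by linarith)⟩
    have hcd : (starRingEnd ℂ) D = D := by
      rw [hDdef]; simp only [_root_.map_add, _root_.map_mul, Complex.conj_conj]; ring
    set t₁ : ℂ := D⁻¹ * ((starRingEnd ℂ) x₁ * (s₁ * x₁ - (starRingEnd ℂ) s₂ * x₂)
        + (starRingEnd ℂ) x₂ * (s₂ * x₁ + (starRingEnd ℂ) s₁ * x₂)) with ht₁
    set t₂ : ℂ := D⁻¹ * (-x₂ * (s₁ * x₁ - (starRingEnd ℂ) s₂ * x₂)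
        + x₁ * (s₂ * x₁ + (starRingEnd ℂ) s₁ * x₂)) with ht₂
    have hct₁ : (starRingEnd ℂ) t₁ = D⁻¹ * (x₁ * ((starRingEnd ℂ) s₁ * (starRingEnd ℂ) x₁
        - s₂ * (starRingEnd ℂ) x₂) + x₂ * ((starRingEnd ℂ) s₂ * (starRingEnd ℂ) x₁
        + s₁ * (starRingEnd ℂ) x₂)) := by
      rw [ht₁]
      simp only [_root_.map_mul, _root_.map_add, _root_.map_sub, map_neg, map_inv₀, Complex.conj_conj, hcd]
    have hct₂ : (starRingEnd ℂ) t₂ = D⁻¹ * (-(starRingEnd ℂ) x₂ * ((starRingEnd ℂ) s₁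
        * (starRingEnd ℂ) x₁ - s₂ * (starRingEnd ℂ) x₂) + (starRingEnd ℂ) x₁
        * ((starRingEnd ℂ) s₂ * (starRingEnd ℂ) x₁ + s₁ * (starRingEnd ℂ) x₂)) := by
      rw [ht₂]
      simp only [_root_.map_mul, _root_.map_add, _root_.map_sub, map_neg, map_inv₀, Complex.conj_conj, hcd]
    refine ⟨t₁, t₂, ?_, ?_, ?_⟩
    · refine (conj_of_eq _ _ _ hu ?_).symm
      ext i j
      fin_cases i <;> fin_cases j <;>
        simp only [Matrix.mul_apply, Fin.sum_univ_two, Matrix.cons_val_zero,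
          Matrix.cons_val_one, Matrix.head_cons, Matrix.head_fin_const,
          Matrix.cons_val_fin_one, Matrix.of_apply, Matrix.cons_val',
          Fin.zero_eta, Fin.mk_one, Fin.isValue] <;>
        (try rw [hct₁, hct₂]) <;> (try rw [ht₁, ht₂]) <;> field_simp <;> rw [hDdef] <;> ring
    · have hA : s₁ + (starRingEnd ℂ) s₁ = t₁ + (starRingEnd ℂ) t₁ := by
        rw [hct₁, ht₁]; field_simp; rw [hDdef]; ring
      rw [Complex.add_conj, Complex.add_conj] at hA
      have := Complex.ofReal_inj.mp hA
      linarith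
    · have hB : s₁ * (starRingEnd ℂ) s₁ + s₂ * (starRingEnd ℂ) s₂
          = t₁ * (starRingEnd ℂ) t₁ + t₂ * (starRingEnd ℂ) t₂ := by
        rw [hct₁, hct₂, ht₁, ht₂]; field_simp; rw [hDdef]; ring
      have hA : s₁ + (starRingEnd ℂ) s₁ = t₁ + (starRingEnd ℂ) t₁ := by
        rw [hct₁, ht₁]; field_simp; rw [hDdef]; ring
      rw [Complex.add_conj, Complex.add_conj] at hA
      have hre := Complex.ofReal_inj.mp hA
      rw [Complex.mul_conj, Complex.mul_conj, Complex.mul_conj, Complex.mul_conj] at hB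
      have hn : Complex.normSq s₁ + Complex.normSq s₂
          = Complex.normSq t₁ + Complex.normSq t₂ := by exact_mod_cast hB
      simp only [Complex.normSq_apply] at hn
      rw [Complex.sq_norm, Complex.sq_norm, Complex.normSq_apply, Complex.normSq_apply]
      have hre' : s₁.re = t₁.re := by linarith
      rw [hre'] at hn
      linear_combination hn
  · rintro ⟨t₁, t₂, rfl, hre, hnorm⟩
    have h1 : s₁ + (starRingEnd ℂ) s₁ = t₁ + (starRingEnd ℂ) t₁ := by
      rw [Complex.add_conj, Complex.add_conj, hre]
    have h2 : s₁ * (starRingEnd ℂ) s₁ + s₂ * (starRingEnd ℂ) s₂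
        = t₁ * (starRingEnd ℂ) t₁ + t₂ * (starRingEnd ℂ) t₂ := by
      rw [Complex.mul_conj, Complex.mul_conj, Complex.mul_conj, Complex.mul_conj]
      have h' : s₁.im ^ 2 + Complex.normSq s₂ = t₁.im ^ 2 + Complex.normSq t₂ := by
        rw [← Complex.sq_norm, ← Complex.sq_norm]; exact hnorm
      norm_cast
      simp only [Complex.normSq_apply] at h' ⊢
      linear_combination h' + (s₁.re + t₁.re) * hre
    by_cases hdeg : t₁ = (starRingEnd ℂ) s₁ ∧ t₂ = -s₂
    · obtain ⟨rfl, rfl⟩ := hdeg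
      by_cases hs2 : s₂ = 0
      · subst hs2
        refine ⟨!![0, -(starRingEnd ℂ) 1; 1, (starRingEnd ℂ) 0], memSigma_form 0 1, ?_,
          conj_of_eq _ _ _ (sigma_det_isUnit 0 1 (by simp)) ?_⟩
        · intro h
          have := congrFun (congrFun h 1) 0
          simp at this
        · ext i j
          fin_cases i <;> fin_cases j <;>
            simp [Matrix.mul_apply, Fin.sum_univ_two]
      · refine ⟨!![0, -(starRingEnd ℂ) (Complex.I * s₂); Complex.I * s₂, (starRingEnd ℂ) 0],
          memSigma_form 0 (Complex.I * s₂), ?_,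
          conj_of_eq _ _ _ (sigma_det_isUnit 0 (Complex.I * s₂) (by simp [hs2])) ?_⟩
        · intro h
          have := congrFun (congrFun h 1) 0
          simp [hs2] at this
        · ext i j
          fin_cases i <;> fin_cases j <;>
            simp [Matrix.mul_apply, Fin.sum_univ_two, _root_.map_mul, Complex.conj_I] <;>
            ring
    · have hx : ¬(t₁ - (starRingEnd ℂ) s₁ = 0 ∧ s₂ + t₂ = 0) := by
        rintro ⟨e1, e2⟩
        exact hdeg ⟨by linear_combination e1, by linear_combination e2⟩
      refine ⟨!![t₁ - (starRingEnd ℂ) s₁, -(starRingEnd ℂ) (s₂ + t₂);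
          s₂ + t₂, (starRingEnd ℂ) (t₁ - (starRingEnd ℂ) s₁)],
        memSigma_form _ _, ?_, conj_of_eq _ _ _ (sigma_det_isUnit _ _ hx) ?_⟩
      · intro h
        apply hx
        constructor
        · have := congrFun (congrFun h 0) 0
          simpa using this
        · have := congrFun (congrFun h 1) 0
          simpa using this
      · ext i j
        fin_cases i <;> fin_cases j <;>
          simp only [Matrix.mul_apply, Fin.sum_univ_two, Matrix.cons_val_zero,
            Matrix.cons_val_one, Matrix.head_cons, Matrix.head_fin_const,
            Matrix.cons_val_fin_one, Matrix.of_apply, Matrix.cons_val',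
            Fin.zero_eta, Fin.mk_one, Fin.isValue,
            _root_.map_sub, _root_.map_add, Complex.conj_conj]
        · linear_combination t₁ * h1 - h2
        · linear_combination (-(starRingEnd ℂ) t₂) * h1
        · linear_combination t₂ * h1
        · linear_combination (starRingEnd ℂ) t₁ * h1 - h2
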